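/- Let G = (V,E) be a finite simple graph and m ≥ 2 an integer. Let A(G;m) ⊂ ℝ^V be the hyperplane arrangement consisting of the hyperplanes {z : z_u = z_w} for each edge {u,w} ∈ E together with the hyperplanes {z : z_v = i} for each v ∈ V and i ∈ {0, 1, …, m−2}. Then the number of bounded connected components of ℝ^V ∖ A(G;m) equals (−1)^{|V|} χ_G(−(m−2)). -/

import Mathlib

open SimpleGraph Polynomial Finset

/-- Number of proper colorings of `G` with `k` colors. -/
noncomputable def properColoringCount {V : Type*} (G : SimpleGraph V) (k : ℕ) : ℕ :=
  Nat.card {f : V → Fin k // ∀ u v, G.Adj u v → f u ≠ f v}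

/-- `P` is the chromatic polynomial of `G`. -/
def IsChromaticPoly {V : Type*} (G : SimpleGraph V) (P : Polynomial ℤ) : Prop :=
  ∀ k : ℕ, P.eval (k : ℤ) = properColoringCount G k

/-- The complement in `ℝ^V` of the arrangement `A(G;m)`, consisting of the hyperplanes
`z_u = z_w` for edges `{u,w}` of `G` and `z_v = i` for `v ∈ V`, `i ∈ {0,…,m-2}`. -/
def arrComplement {V : Type*} (G : SimpleGraph V) (m : ℕ) : Set (V → ℝ) :=
  {z | (∀ u w, G.Adj u w → z u ≠ z w) ∧ ∀ v : V, ∀ i : ℕ, i ≤ m - 2 → z v ≠ (i : ℝ)}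

open scoped Classical

noncomputable def numComp {W : Type*} (H : SimpleGraph W) : ℕ := Nat.card H.ConnectedComponent
noncomputable def CP {W : Type*} [Fintype W] (H : SimpleGraph W) : Polynomial ℤ :=
  ∑ S ∈ H.edgeFinset.powerset,
    (-1 : ℤ) ^ S.card • (X : Polynomial ℤ) ^ numComp (fromEdgeSet (S : Set (Sym2 W)))

lemma edgeFinset_eq_empty' {W : Type*} [Fintype W] {H : SimpleGraph W} (h : H = ⊥) :
    H.edgeFinset = ∅ := by
  ext e
  simp only [SimpleGraph.mem_edgeFinset, Finset.notMem_empty, iff_false]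
  subst h
  simp

lemma CP_bot' {W : Type*} [Fintype W] {H : SimpleGraph W} (h : H = ⊥) :
    CP H = (X : Polynomial ℤ) ^ Fintype.card W := by
  have e : H.ConnectedComponent ≃ W := by
    refine Equiv.symm (Equiv.ofBijective (fun w => SimpleGraph.connectedComponentMk _ w) ⟨?_, ?_⟩)
    · intro a b hab
      have := SimpleGraph.ConnectedComponent.exact hab
      rw [h, SimpleGraph.reachable_bot] at this
      exact this
    · intro c
      exact c.exists_rep
  rw [CP, edgeFinset_eq_empty' h, Finset.powerset_empty, Finset.sum_singleton]
  have h2 : fromEdgeSet ((↑(∅ : Finset (Sym2 W))) : Set (Sym2 W)) = H := by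
    rw [h]; simp
  rw [h2]
  rw [numComp, Nat.card_congr e, Nat.card_eq_fintype_card]; simp

lemma walk_const {W : Type*} {K : SimpleGraph W} {β : Type*} {f : W → β}
    (h : ∀ u w, K.Adj u w → f u = f w) {v w : W} (p : K.Walk v w) : f v = f w := by
  induction p with
  | nil => rfl
  | cons ha _ ih => exact (h _ _ ha).trans ih

lemma card_const_on {W : Type*} [Fintype W] (K : SimpleGraph W) (k : ℕ) :
    Nat.card {f : W → Fin k // ∀ u w, K.Adj u w → f u = f w} = k ^ numComp K := by
  have e : {f : W → Fin k // ∀ u w, K.Adj u w → f u = f w} ≃ (K.ConnectedComponent → Fin k) :=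
    { toFun := fun fh => SimpleGraph.ConnectedComponent.lift fh.1 (fun v w p _ => walk_const fh.2 p)
      invFun := fun g => ⟨fun v => g (K.connectedComponentMk v), fun u w ha => by
        simp only []
        rw [SimpleGraph.ConnectedComponent.sound ha.reachable]⟩
      left_inv := fun fh => rfl
      right_inv := fun g => by
        funext cc
        induction cc using SimpleGraph.ConnectedComponent.ind
        rfl }
  rw [Nat.card_congr e, Nat.card_fun, Nat.card_eq_fintype_card, Fintype.card_fin, numComp]

lemma nat_card_subtype {α : Type*} [Fintype α] (p : α → Prop) :
    Nat.card {x // p x} = ∑ x : α, if p x then 1 else 0 := by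
  rw [Nat.card_eq_fintype_card, Fintype.card_subtype, Finset.card_filter]

theorem CP_eval {W : Type*} [Fintype W] (H : SimpleGraph W) (k : ℕ) :
    (CP H).eval (k : ℤ) = properColoringCount H k := by
  -- monochromatic edge set of a coloring
  set Mf : (W → Fin k) → Finset (Sym2 W) :=
    fun f => H.edgeFinset.filter (fun e => ∀ u w, e = s(u, w) → f u = f w) with hMf
  have hMfE : ∀ f, Mf f ⊆ H.edgeFinset := fun f => Finset.filter_subset _ _
  -- constant-on-S condition
  have hconst : ∀ (S : Finset (Sym2 W)), S ∈ H.edgeFinset.powerset → ∀ f : W → Fin k,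
      ((∀ u w, (fromEdgeSet (S : Set (Sym2 W))).Adj u w → f u = f w) ↔ S ⊆ Mf f) := by
    intro S hS f
    rw [Finset.mem_powerset] at hS
    constructor
    · intro h e he
      rw [hMf, Finset.mem_filter]
      refine ⟨hS he, ?_⟩
      intro u w hew
      by_cases huw : u = w
      · rw [huw]
      · exact h u w (by rw [SimpleGraph.fromEdgeSet_adj]; exact ⟨by rw [← hew]; exact_mod_cast he, huw⟩)
    · intro h u w ha
      rw [SimpleGraph.fromEdgeSet_adj] at ha
      have := h (by exact_mod_cast ha.1)
      rw [hMf, Finset.mem_filter] at this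
      exact this.2 u w rfl
  -- Mf f = ∅ iff f is proper
  have hproper : ∀ f : W → Fin k, (Mf f = ∅ ↔ ∀ u w, H.Adj u w → f u ≠ f w) := by
    intro f
    constructor
    · intro h u w ha hfe
      have : s(u, w) ∈ Mf f := by
        rw [hMf, Finset.mem_filter]
        refine ⟨by rw [SimpleGraph.mem_edgeFinset]; exact ha, ?_⟩
        intro u' w' he
        rw [Sym2.eq_iff] at he
        rcases he with ⟨rfl, rfl⟩ | ⟨rfl, rfl⟩
        · exact hfe
        · exact hfe.symm
      rw [h] at this
      exact absurd this (Finset.notMem_empty _)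
    · intro h
      rw [Finset.eq_empty_iff_forall_notMem]
      intro e he
      rw [hMf, Finset.mem_filter] at he
      obtain ⟨he1, he2⟩ := he
      rw [SimpleGraph.mem_edgeFinset] at he1
      induction e with
      | _ u w =>
        exact h u w he1 (he2 u w rfl)
  -- evaluate
  rw [CP]
  rw [Polynomial.eval_finset_sum]
  have : ∀ S ∈ H.edgeFinset.powerset,
      ((-1 : ℤ) ^ S.card • (X : Polynomial ℤ) ^ numComp (fromEdgeSet (S : Set (Sym2 W)))).eval (k : ℤ)
      = (-1 : ℤ) ^ S.card * ∑ f : W → Fin k, if S ⊆ Mf f then 1 else 0 := by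
    intro S hS
    rw [Polynomial.eval_smul, smul_eq_mul, Polynomial.eval_pow, Polynomial.eval_X]
    congr 1
    have := card_const_on (fromEdgeSet (S : Set (Sym2 W))) k
    have h2 : ((k : ℤ)) ^ numComp (fromEdgeSet (S : Set (Sym2 W)))
        = ((k ^ numComp (fromEdgeSet (S : Set (Sym2 W))) : ℕ) : ℤ) := by push_cast; ring
    rw [h2, ← this, nat_card_subtype]
    push_cast
    congr 1
    funext f
    exact if_congr (hconst S hS f) rfl rfl
  rw [Finset.sum_congr rfl this]
  have swap : ∑ S ∈ H.edgeFinset.powerset, (-1 : ℤ) ^ S.card * ∑ f : W → Fin k, (if S ⊆ Mf f then 1 else 0)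
      = ∑ f : W → Fin k, ∑ S ∈ H.edgeFinset.powerset, (-1 : ℤ) ^ S.card * (if S ⊆ Mf f then 1 else 0) := by
    simp_rw [Finset.mul_sum]
    rw [Finset.sum_comm]
  rw [swap]
  have inner : ∀ f : W → Fin k,
      ∑ S ∈ H.edgeFinset.powerset, (-1 : ℤ) ^ S.card * (if S ⊆ Mf f then 1 else 0)
      = if (∀ u w, H.Adj u w → f u ≠ f w) then 1 else 0 := by
    intro f
    have h1 : ∑ S ∈ H.edgeFinset.powerset, (-1 : ℤ) ^ S.card * (if S ⊆ Mf f then 1 else 0)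
        = ∑ S ∈ (Mf f).powerset, (-1 : ℤ) ^ S.card := by
      simp_rw [mul_ite, mul_one, mul_zero]
      rw [← Finset.sum_filter]
      congr 1
      ext S
      simp only [Finset.mem_filter, Finset.mem_powerset]
      constructor
      · rintro ⟨_, h2⟩; exact h2
      · intro h2; exact ⟨h2.trans (hMfE f), h2⟩
    rw [h1, Finset.sum_powerset_neg_one_pow_card, if_congr (hproper f) rfl rfl]
  rw [Finset.sum_congr rfl (fun f _ => inner f), ← Finset.sum_filter]
  rw [properColoringCount, nat_card_subtype]
  push_cast
  rw [← Finset.sum_filter]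

lemma card_split {α : Type*} [Finite α] (p q : α → Prop) :
    Nat.card {x // p x} = Nat.card {x // p x ∧ q x} + Nat.card {x // p x ∧ ¬ q x} := by
  cases nonempty_fintype α
  rw [Nat.card_eq_fintype_card, Nat.card_eq_fintype_card, Nat.card_eq_fintype_card,
    Fintype.card_subtype, Fintype.card_subtype, Fintype.card_subtype]
  rw [← Finset.filter_filter, ← Finset.filter_filter]
  exact (Finset.card_filter_add_card_filter_not (s := Finset.univ.filter p) q).symm

lemma poly_ext {P Q : Polynomial ℤ} (h : ∀ k : ℕ, P.eval (k : ℤ) = Q.eval (k : ℤ)) : P = Q := by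
  rw [← sub_eq_zero]
  apply Polynomial.eq_zero_of_infinite_isRoot
  apply Set.infinite_of_injective_forall_mem (f := fun n : ℕ => (n : ℤ))
  · exact fun a b hab => Nat.cast_injective hab
  · intro a
    simp only [Set.mem_setOf_eq, Polynomial.IsRoot, Polynomial.eval_sub, sub_eq_zero]
    exact h a

section DC
variable {W : Type*}

/-- contraction of the edge `{u₀, w₀}`, as a graph on vertices `≠ w₀`. -/
def Hcon (H : SimpleGraph W) (u₀ w₀ : W) : SimpleGraph {x : W // x ≠ w₀} where
  Adj x y := H.Adj ↑x ↑y ∨ ((x : W) = u₀ ∧ (y : W) ≠ u₀ ∧ H.Adj w₀ ↑y) ∨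
    ((y : W) = u₀ ∧ (x : W) ≠ u₀ ∧ H.Adj w₀ ↑x)
  symm := ⟨by
    rintro x y (h | ⟨h1, h2, h3⟩ | ⟨h1, h2, h3⟩)
    · exact Or.inl h.symm
    · exact Or.inr (Or.inr ⟨h1, h2, h3⟩)
    · exact Or.inr (Or.inl ⟨h1, h2, h3⟩)⟩
  loopless := ⟨by
    rintro x (h | ⟨h1, h2, _⟩ | ⟨h1, h2, _⟩)
    · exact H.loopless.irrefl _ h
    · exact h2 h1
    · exact h2 h1⟩

/-- projection to the contracted vertex set -/
noncomputable def conπ (u₀ w₀ : W) (hne : u₀ ≠ w₀) (x : W) : {x : W // x ≠ w₀} :=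
  if h : x = w₀ then ⟨u₀, hne⟩ else ⟨x, h⟩

variable {H : SimpleGraph W} {u₀ w₀ : W}

lemma conπ_w₀ (hne : u₀ ≠ w₀) : conπ u₀ w₀ hne w₀ = ⟨u₀, hne⟩ := dif_pos rfl

lemma conπ_of_ne (hne : u₀ ≠ w₀) {x : W} (h : x ≠ w₀) : conπ u₀ w₀ hne x = ⟨x, h⟩ := dif_neg h

lemma del_adj {x y : W} :
    (H.deleteEdges {s(u₀, w₀)}).Adj x y ↔
      H.Adj x y ∧ ¬(x = u₀ ∧ y = w₀) ∧ ¬(x = w₀ ∧ y = u₀) := by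
  rw [SimpleGraph.deleteEdges_adj]
  simp only [Set.mem_singleton_iff, Sym2.eq_iff]
  tauto

lemma conπ_ne_of_adj (hne : u₀ ≠ w₀) {x y : W} (h : (H.deleteEdges {s(u₀, w₀)}).Adj x y) :
    conπ u₀ w₀ hne x ≠ conπ u₀ w₀ hne y := by
  rw [del_adj] at h
  obtain ⟨ha, h1, h2⟩ := h
  intro hc
  by_cases hx : x = w₀
  · by_cases hy : y = w₀
    · rw [hx, hy] at ha; exact H.loopless.irrefl _ ha
    · rw [hx, conπ_w₀ hne, conπ_of_ne hne hy] at hc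
      have : u₀ = y := congrArg Subtype.val hc
      exact h2 ⟨hx, this.symm⟩
  · by_cases hy : y = w₀
    · rw [hy, conπ_w₀ hne, conπ_of_ne hne hx] at hc
      have : x = u₀ := congrArg Subtype.val hc
      exact h1 ⟨this, hy⟩
    · rw [conπ_of_ne hne hx, conπ_of_ne hne hy] at hc
      have : x = y := congrArg Subtype.val hc
      subst this
      exact H.loopless.irrefl _ ha

lemma adj_conπ (hne : u₀ ≠ w₀) {x y : W} (h : (H.deleteEdges {s(u₀, w₀)}).Adj x y) :
    (Hcon H u₀ w₀).Adj (conπ u₀ w₀ hne x) (conπ u₀ w₀ hne y) := by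
  rw [del_adj] at h
  obtain ⟨ha, h1, h2⟩ := h
  by_cases hx : x = w₀
  · have hy : y ≠ w₀ := fun hc => H.loopless.irrefl _ (by rw [hx, hc] at ha; exact ha)
    have hyu : y ≠ u₀ := fun hc => h2 ⟨hx, hc⟩
    right; left
    rw [hx, conπ_w₀ hne, conπ_of_ne hne hy]
    rw [hx] at ha
    exact ⟨rfl, hyu, ha⟩
  · by_cases hy : y = w₀
    · have hxu : x ≠ u₀ := fun hc => h1 ⟨hc, hy⟩
      right; right
      rw [hy, conπ_w₀ hne, conπ_of_ne hne hx]
      rw [hy] at ha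
      exact ⟨rfl, hxu, ha.symm⟩
    · left
      rw [conπ_of_ne hne hx, conπ_of_ne hne hy]
      exact ha

lemma count_DC [Fintype W] (hadj : H.Adj u₀ w₀) (k : ℕ) :
    properColoringCount (H.deleteEdges {s(u₀, w₀)}) k =
      properColoringCount H k + properColoringCount (Hcon H u₀ w₀) k := by
  have hne : u₀ ≠ w₀ := hadj.ne
  rw [properColoringCount,
    card_split (fun f : W → Fin k => ∀ u v, (H.deleteEdges {s(u₀, w₀)}).Adj u v → f u ≠ f v)
      (fun f => f u₀ ≠ f w₀)]
  congr 1
  · -- proper for H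
    rw [properColoringCount]
    apply Nat.card_congr
    apply Equiv.subtypeEquivRight
    intro f
    constructor
    · rintro ⟨hp, hne'⟩ a b hab hfe
      by_cases hc : (a = u₀ ∧ b = w₀) ∨ (a = w₀ ∧ b = u₀)
      · rcases hc with ⟨rfl, rfl⟩ | ⟨rfl, rfl⟩
        · exact hne' hfe
        · exact hne' hfe.symm
      · push_neg at hc
        exact hp a b (by
          rw [del_adj]
          exact ⟨hab, fun h => (hc.1 h.1 h.2).elim, fun h => (hc.2 h.1 h.2).elim⟩) hfe
    · intro hp
      refine ⟨fun a b hab => hp a b (by rw [del_adj] at hab; exact hab.1), hp u₀ w₀ hadj⟩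
  · -- proper for contraction
    rw [properColoringCount]
    apply Nat.card_congr
    refine { toFun := ?_, invFun := ?_, left_inv := ?_, right_inv := ?_ }
    · rintro ⟨f, hp, hfe⟩
      rw [not_ne_iff] at hfe
      refine ⟨fun x => f ↑x, ?_⟩
      rintro x y (h | ⟨h1, h2, h3⟩ | ⟨h1, h2, h3⟩) hfeq
      · refine hp ↑x ↑y ?_ hfeq
        rw [del_adj]
        exact ⟨h, fun hc => y.2 hc.2, fun hc => x.2 hc.1⟩
      · refine hp w₀ ↑y ?_ ?_
        · rw [del_adj]
          exact ⟨h3, fun hc => hne hc.1.symm, fun hc => h2 hc.2⟩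
        · rw [← hfe, ← h1]
          exact hfeq
      · refine hp w₀ ↑x ?_ ?_
        · rw [del_adj]
          exact ⟨h3, fun hc => hne hc.1.symm, fun hc => h2 hc.2⟩
        · rw [← hfe, ← h1]
          exact hfeq.symm
    · rintro ⟨g, hp⟩
      refine ⟨fun x => g (conπ u₀ w₀ hne x), ?_, ?_⟩
      · intro a b hab hfeq
        exact hp _ _ (adj_conπ hne hab) hfeq
      · rw [not_ne_iff]
        show g (conπ u₀ w₀ hne u₀) = g (conπ u₀ w₀ hne w₀)
        rw [conπ_w₀ hne, conπ_of_ne hne hne]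
    · rintro ⟨f, hp, hfe⟩
      rw [not_ne_iff] at hfe
      apply Subtype.ext
      funext x
      show f ↑(conπ u₀ w₀ hne x) = f x
      by_cases hx : x = w₀
      · rw [hx, conπ_w₀ hne]
        exact hfe
      · rw [conπ_of_ne hne hx]
    · rintro ⟨g, hp⟩
      apply Subtype.ext
      funext x
      show g (conπ u₀ w₀ hne ↑x) = g x
      rw [conπ_of_ne hne x.2, Subtype.eta]
end DC


section DDdef
variable {W : Type*}

/-- `z` realizes the cell data `(c, s)` for the graph `H`. -/
def Realizes (H : SimpleGraph W) (kk : ℕ) (c : W → Fin kk) (s : W → W → Prop) (z : W → ℝ) : Prop :=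
  (∀ v, z v ∈ Set.Ioo (((c v : ℕ) : ℝ)) (((c v : ℕ) : ℝ) + 1)) ∧
  (∀ u w, H.Adj u w → z u ≠ z w) ∧
  (∀ u w, H.Adj u w → (s u w ↔ z u < z w))

/-- the set of realizable cell data: in bijection with bounded regions. -/
def DD (H : SimpleGraph W) (kk : ℕ) : Set ((W → Fin kk) × (W → W → Prop)) :=
  {p | (∀ u w, ¬ H.Adj u w → ¬ p.2 u w) ∧ ∃ z, Realizes H kk p.1 p.2 z}

lemma combo_pair {a b t : ℝ} (ht : 0 ≤ t) (ht' : t ≤ 1) :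
    min a b ≤ a + t * (b - a) ∧ a + t * (b - a) ≤ max a b := by
  rcases le_total a b with h | h
  · rw [min_eq_left h, max_eq_right h]
    have h1 := mul_nonneg ht (sub_nonneg.mpr h)
    have h2 : t * (b - a) ≤ 1 * (b - a) := mul_le_mul_of_nonneg_right ht' (sub_nonneg.mpr h)
    constructor <;> linarith
  · rw [min_eq_right h, max_eq_left h]
    have h1 : t * (b - a) ≤ 0 := mul_nonpos_of_nonneg_of_nonpos ht (sub_nonpos.mpr h)
    have h2 : 1 * (b - a) ≤ t * (b - a) := mul_le_mul_of_nonpos_right ht' (sub_nonpos.mpr h)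
    constructor <;> linarith

lemma combo_mem {l r a b t : ℝ} (ha : l < a) (ha' : a < r) (hb : l < b) (hb' : b < r)
    (ht : 0 ≤ t) (ht' : t ≤ 1) : l < a + t * (b - a) ∧ a + t * (b - a) < r := by
  obtain ⟨g1, g2⟩ := combo_pair (a := a) (b := b) ht ht'
  exact ⟨lt_of_lt_of_le (lt_min ha hb) g1, lt_of_le_of_lt g2 (max_lt ha' hb')⟩

lemma combo_lt {a b a' b' t : ℝ} (h : a < a') (h' : b < b') (ht : 0 ≤ t) (ht' : t ≤ 1) :
    a + t * (b - a) < a' + t * (b' - a') := by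
  obtain ⟨g1, _⟩ := combo_pair (a := a' - a) (b := b' - b) ht ht'
  have hident : (a' - a) + t * ((b' - b) - (a' - a)) = (a' + t * (b' - a')) - (a + t * (b - a)) := by
    ring
  have hmin : (0 : ℝ) < min (a' - a) (b' - b) := lt_min (by linarith) (by linarith)
  linarith

variable {H : SimpleGraph W} {kk : ℕ} {c : W → Fin kk} {s : W → W → Prop}

lemma realizes_combo {z z' : W → ℝ} (h : Realizes H kk c s z) (h' : Realizes H kk c s z')
    {t : ℝ} (ht : 0 ≤ t) (ht' : t ≤ 1) :
    Realizes H kk c s (fun x => z x + t * (z' x - z x)) := by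
  obtain ⟨h1, h2, h3⟩ := h
  obtain ⟨h1', h2', h3'⟩ := h'
  have key : ∀ u w, H.Adj u w → (z u < z w ↔ (z u + t * (z' u - z u) < z w + t * (z' w - z w))) := by
    intro u w ha
    constructor
    · intro hlt
      exact combo_lt hlt ((h3' u w ha).mp ((h3 u w ha).mpr hlt)) ht ht'
    · intro hlt
      by_contra hc
      have hgt : z w < z u := lt_of_le_of_ne (not_lt.mp hc) (h2 w u ha.symm)
      have hgt' : z' w < z' u := (h3' w u ha.symm).mp ((h3 w u ha.symm).mpr hgt)
      exact absurd (combo_lt hgt hgt' ht ht') (not_lt.mpr (le_of_lt hlt))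
  refine ⟨?_, ?_, ?_⟩
  · intro v
    exact combo_mem (h1 v).1 (h1 v).2 (h1' v).1 (h1' v).2 ht ht'
  · intro u w ha
    rcases lt_or_gt_of_ne (h2 u w ha) with hlt | hgt
    · exact ne_of_lt ((key u w ha).mp hlt)
    · exact (ne_of_lt ((key w u ha.symm).mp hgt)).symm
  · intro u w ha
    rw [h3 u w ha]
    exact key u w ha

/-- perturb the coordinate `a` upwards, keeping realizability -/
lemma pert_up [Fintype W] (a : W) {z : W → ℝ} (h : Realizes H kk c s z) :
    ∃ z₁, Realizes H kk c s z₁ ∧ (∀ x, x ≠ a → z₁ x = z x) ∧ z a < z₁ a := by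
  obtain ⟨h1, h2, h3⟩ := h
  set T : Finset ℝ := insert ((((c a : ℕ) : ℝ)) + 1 - z a)
    ((Finset.univ.filter (fun x => z a < z x)).image (fun x => z x - z a)) with hT
  have hTne : T.Nonempty := ⟨_, Finset.mem_insert_self _ _⟩
  have hTpos : ∀ b ∈ T, 0 < b := by
    intro b hb
    rw [hT, Finset.mem_insert] at hb
    rcases hb with rfl | hb
    · have := (h1 a).2; linarith
    · obtain ⟨x, hx, rfl⟩ := Finset.mem_image.mp hb
      have := (Finset.mem_filter.mp hx).2; linarith
  set ε : ℝ := T.min' hTne / 2 with hε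
  have hεpos : 0 < ε := by
    have := hTpos _ (T.min'_mem hTne); rw [hε]; linarith
  have hεlt : ∀ b ∈ T, ε < b := by
    intro b hb
    have h5 := T.min'_le b hb
    have := hTpos _ (T.min'_mem hTne)
    rw [hε]; linarith
  set z₁ := Function.update z a (z a + ε) with hz₁
  have hz₁a : z₁ a = z a + ε := Function.update_self a _ z
  have hz₁x : ∀ x, x ≠ a → z₁ x = z x := fun x hx => Function.update_of_ne hx _ z
  have key : ∀ x, z a ≠ z x → x ≠ a → (z a < z x ↔ z₁ a < z₁ x) := by
    intro x hne hxa
    rw [hz₁a, hz₁x x hxa]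
    constructor
    · intro hlt
      have : z x - z a ∈ T := by
        rw [hT, Finset.mem_insert]
        right
        exact Finset.mem_image.mpr ⟨x, Finset.mem_filter.mpr ⟨Finset.mem_univ x, hlt⟩, rfl⟩
      have := hεlt _ this; linarith
    · intro hlt
      rcases lt_or_gt_of_ne hne with h' | h'
      · exact h'
      · linarith
  refine ⟨z₁, ⟨?_, ?_, ?_⟩, hz₁x, by rw [hz₁a]; linarith⟩
  · intro v
    by_cases hv : v = a
    · subst hv
      rw [hz₁a]
      have hup : ε < ((c v : ℕ) : ℝ) + 1 - z v := hεlt _ (Finset.mem_insert_self _ _)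
      exact ⟨by have := (h1 v).1; linarith, by linarith⟩
    · rw [hz₁x v hv]; exact h1 v
  · intro u w ha
    by_cases hu : u = a
    · subst hu
      have hw : w ≠ u := (ha.ne).symm
      rcases lt_or_gt_of_ne (h2 u w ha) with hlt | hgt
      · exact ne_of_lt ((key w (h2 u w ha) hw).mp hlt)
      · rw [hz₁a, hz₁x w hw]; intro hc; linarith
    · by_cases hw : w = a
      · subst hw
        rcases lt_or_gt_of_ne (h2 u w ha) with hlt | hgt
        · rw [hz₁a, hz₁x u hu]; intro hc; linarith
        · exact (ne_of_lt ((key u (h2 w u ha.symm) hu).mp hgt)).symm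
      · rw [hz₁x u hu, hz₁x w hw]; exact h2 u w ha
  · intro u w ha
    rw [h3 u w ha]
    by_cases hu : u = a
    · subst hu
      exact key w (h2 u w ha) (ha.ne).symm
    · by_cases hw : w = a
      · subst hw
        constructor
        · intro hlt
          rw [hz₁a, hz₁x u hu]; linarith
        · intro hlt
          rw [hz₁a, hz₁x u hu] at hlt
          rcases lt_or_gt_of_ne (h2 u w ha) with h' | h'
          · exact h'
          · exfalso
            have : z u - z w ∈ T := by
              rw [hT, Finset.mem_insert]
              right
              exact Finset.mem_image.mpr ⟨u, Finset.mem_filter.mpr ⟨Finset.mem_univ u, h'⟩, rfl⟩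
            have := hεlt _ this; linarith
      · rw [hz₁x u hu, hz₁x w hw]


variable {H : SimpleGraph W} {kk : ℕ} {c : W → Fin kk} {s : W → W → Prop}
lemma pert_down [Fintype W] (a : W) {z : W → ℝ} (h : Realizes H kk c s z) :
    ∃ z₁, Realizes H kk c s z₁ ∧ (∀ x, x ≠ a → z₁ x = z x) ∧ z₁ a < z a := by
  obtain ⟨h1, h2, h3⟩ := h
  set T : Finset ℝ := insert (z a - ((c a : ℕ) : ℝ))
    ((Finset.univ.filter (fun x => z x < z a)).image (fun x => z a - z x)) with hT
  have hTne : T.Nonempty := ⟨_, Finset.mem_insert_self _ _⟩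
  have hTpos : ∀ b ∈ T, 0 < b := by
    intro b hb
    rw [hT, Finset.mem_insert] at hb
    rcases hb with rfl | hb
    · have := (h1 a).1; linarith
    · obtain ⟨x, hx, rfl⟩ := Finset.mem_image.mp hb
      have := (Finset.mem_filter.mp hx).2; linarith
  set ε : ℝ := T.min' hTne / 2 with hε
  have hεpos : 0 < ε := by
    have := hTpos _ (T.min'_mem hTne); rw [hε]; linarith
  have hεlt : ∀ b ∈ T, ε < b := by
    intro b hb
    have h5 := T.min'_le b hb
    have := hTpos _ (T.min'_mem hTne)
    rw [hε]; linarith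
  set z₁ := Function.update z a (z a - ε) with hz₁
  have hz₁a : z₁ a = z a - ε := Function.update_self a _ z
  have hz₁x : ∀ x, x ≠ a → z₁ x = z x := fun x hx => Function.update_of_ne hx _ z
  have key : ∀ x, z x ≠ z a → x ≠ a → (z x < z a ↔ z₁ x < z₁ a) := by
    intro x hne hxa
    rw [hz₁a, hz₁x x hxa]
    constructor
    · intro hlt
      have : z a - z x ∈ T := by
        rw [hT, Finset.mem_insert]
        right
        exact Finset.mem_image.mpr ⟨x, Finset.mem_filter.mpr ⟨Finset.mem_univ x, hlt⟩, rfl⟩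
      have := hεlt _ this; linarith
    · intro hlt
      rcases lt_or_gt_of_ne hne with h' | h'
      · exact h'
      · linarith
  refine ⟨z₁, ⟨?_, ?_, ?_⟩, hz₁x, by rw [hz₁a]; linarith⟩
  · intro v
    by_cases hv : v = a
    · subst hv
      rw [hz₁a]
      have hdn : ε < z v - ((c v : ℕ) : ℝ) := hεlt _ (Finset.mem_insert_self _ _)
      exact ⟨by linarith, by have := (h1 v).2; linarith⟩
    · rw [hz₁x v hv]; exact h1 v
  · intro u w ha
    by_cases hu : u = a
    · subst hu
      have hw : w ≠ u := (ha.ne).symm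
      rcases lt_or_gt_of_ne (h2 u w ha) with hlt | hgt
      · rw [hz₁a, hz₁x w hw]; intro hc; linarith
      · exact ((key w (h2 u w ha).symm hw).mp hgt).ne'
    · by_cases hw : w = a
      · subst hw
        rcases lt_or_gt_of_ne (h2 u w ha) with hlt | hgt
        · exact ne_of_lt ((key u (h2 u w ha) hu).mp hlt)
        · rw [hz₁a, hz₁x u hu]; intro hc; linarith
      · rw [hz₁x u hu, hz₁x w hw]; exact h2 u w ha
  · intro u w ha
    rw [h3 u w ha]
    by_cases hu : u = a
    · subst hu
      constructor
      · intro hlt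
        rw [hz₁a, hz₁x w (ha.ne).symm ]; linarith
      · intro hlt
        rw [hz₁a, hz₁x w (ha.ne).symm] at hlt
        rcases lt_or_gt_of_ne (h2 u w ha) with h' | h'
        · exact h'
        · exfalso
          have : z u - z w ∈ T := by
            rw [hT, Finset.mem_insert]
            right
            exact Finset.mem_image.mpr ⟨w, Finset.mem_filter.mpr ⟨Finset.mem_univ w, h'⟩, rfl⟩
          have := hεlt _ this; linarith
    · by_cases hw : w = a
      · subst hw
        exact key u (h2 u w ha) hu
      · rw [hz₁x u hu, hz₁x w hw]



lemma tie_of_both {a b : W} (hup : ∃ z, Realizes H kk c s z ∧ z a < z b)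
    (hdn : ∃ z, Realizes H kk c s z ∧ z b < z a) :
    ∃ z, Realizes H kk c s z ∧ z a = z b := by
  obtain ⟨z1, hz1, hlt1⟩ := hup
  obtain ⟨z2, hz2, hlt2⟩ := hdn
  set g : ℝ → W → ℝ := fun t x => z1 x + t * (z2 x - z1 x) with hg
  set f : ℝ → ℝ := fun t => g t a - g t b with hf
  have hcont : ContinuousOn f (Set.Icc (0 : ℝ) 1) := by
    apply Continuous.continuousOn
    rw [hf, hg]
    continuity
  have h0 : f 0 = z1 a - z1 b := by simp only [hf, hg]; ring
  have h1 : f 1 = z2 a - z2 b := by simp only [hf, hg]; ring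
  have hiv := intermediate_value_Icc (by norm_num : (0:ℝ) ≤ 1) hcont
  have h0mem : (0 : ℝ) ∈ Set.Icc (f 0) (f 1) := by
    rw [h0, h1]
    constructor <;> [linarith; linarith]
  obtain ⟨t, ht, hft⟩ := hiv h0mem
  refine ⟨g t, realizes_combo hz1 hz2 ht.1 ht.2, ?_⟩
  have : g t a - g t b = 0 := hft
  linarith

lemma up_or_down [Fintype W] {a b : W} (hab : a ≠ b) (hz : ∃ z, Realizes H kk c s z) :
    (∃ z, Realizes H kk c s z ∧ z a < z b) ∨ (∃ z, Realizes H kk c s z ∧ z b < z a) := by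
  obtain ⟨z, hz⟩ := hz
  rcases lt_trichotomy (z a) (z b) with h | h | h
  · exact Or.inl ⟨z, hz, h⟩
  · obtain ⟨z₁, hz₁, hfix, hlt⟩ := pert_up a hz
    right
    refine ⟨z₁, hz₁, ?_⟩
    rw [hfix b hab.symm, ← h]
    exact hlt
  · exact Or.inr ⟨z, hz, h⟩

lemma both_of_tie [Fintype W] {a b : W} (hab : a ≠ b) (h : ∃ z, Realizes H kk c s z ∧ z a = z b) :
    (∃ z, Realizes H kk c s z ∧ z a < z b) ∧ (∃ z, Realizes H kk c s z ∧ z b < z a) := by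
  obtain ⟨z, hz, he⟩ := h
  constructor
  · obtain ⟨z₁, hz₁, hfix, hlt⟩ := pert_up b hz
    refine ⟨z₁, hz₁, ?_⟩
    rw [hfix a hab]
    rw [he]
    exact hlt
  · obtain ⟨z₁, hz₁, hfix, hlt⟩ := pert_down b hz
    refine ⟨z₁, hz₁, ?_⟩
    rw [hfix a hab, he]
    exact hlt

end DDdef

lemma propfun_ext {α : Type*} {s t : α → α → Prop} (h : ∀ x y, s x y ↔ t x y) : s = t :=
  funext fun x => funext fun y => propext (h x y)

lemma card_or_and {α : Type*} [Finite α] (p q r : α → Prop) (hpq : ∀ x, p x → (q x ∨ r x)) :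
    Nat.card {x // p x ∧ q x} + Nat.card {x // p x ∧ r x}
      = Nat.card {x // p x} + Nat.card {x // p x ∧ q x ∧ r x} := by
  cases nonempty_fintype α
  rw [Nat.card_eq_fintype_card, Nat.card_eq_fintype_card, Nat.card_eq_fintype_card,
    Nat.card_eq_fintype_card, Fintype.card_subtype, Fintype.card_subtype, Fintype.card_subtype,
    Fintype.card_subtype]
  have key := Finset.card_union_add_card_inter
    (Finset.univ.filter (fun x => p x ∧ q x)) (Finset.univ.filter (fun x => p x ∧ r x))
  rw [← Finset.filter_or, ← Finset.filter_and] at key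
  have e1 : Finset.univ.filter (fun x => (p x ∧ q x) ∨ (p x ∧ r x)) = Finset.univ.filter p := by
    apply Finset.filter_congr
    intro x _
    constructor
    · rintro (⟨h1, _⟩ | ⟨h1, _⟩) <;> exact h1
    · intro h1
      rcases hpq x h1 with h2 | h2
      · exact Or.inl ⟨h1, h2⟩
      · exact Or.inr ⟨h1, h2⟩
  have e2 : Finset.univ.filter (fun x => (p x ∧ q x) ∧ (p x ∧ r x))
      = Finset.univ.filter (fun x => p x ∧ q x ∧ r x) := by
    apply Finset.filter_congr
    intro x _
    tauto
  rw [e1, e2] at key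
  have i1 : (Finset.univ.filter p).card = (Finset.univ.filter p).card := rfl
  convert key.symm using 2 <;> congr 1 <;> exact Subsingleton.elim _ _


section DDC
variable {W : Type*} [Fintype W] {kk : ℕ} {H : SimpleGraph W} {u₀ w₀ : W}

lemma realizes_del {c : W → Fin kk} {s : W → W → Prop} {z : W → ℝ} (h : Realizes H kk c s z) :
    Realizes (H.deleteEdges {s(u₀, w₀)}) kk c
      (fun x y => s x y ∧ ¬(x = u₀ ∧ y = w₀) ∧ ¬(x = w₀ ∧ y = u₀)) z := by
  obtain ⟨h1, h2, h3⟩ := h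
  refine ⟨h1, fun x y hxy => h2 x y (del_adj.mp hxy).1, fun x y hxy => ?_⟩
  obtain ⟨ha, hp1, hp2⟩ := del_adj.mp hxy
  rw [← h3 x y ha]
  constructor
  · rintro ⟨hs, _, _⟩; exact hs
  · intro hs; exact ⟨hs, hp1, hp2⟩

lemma card_up (hadj : H.Adj u₀ w₀) :
    Nat.card {p : (W → Fin kk) × (W → W → Prop) // p ∈ DD H kk ∧ p.2 u₀ w₀}
      = Nat.card {q : (W → Fin kk) × (W → W → Prop) // q ∈ DD (H.deleteEdges {s(u₀, w₀)}) kk ∧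
          ∃ z, Realizes (H.deleteEdges {s(u₀, w₀)}) kk q.1 q.2 z ∧ z u₀ < z w₀} := by
  apply Nat.card_congr
  refine
    { toFun := fun p => ⟨(p.1.1, fun x y => p.1.2 x y ∧ ¬(x = u₀ ∧ y = w₀) ∧ ¬(x = w₀ ∧ y = u₀)), ?_⟩
      invFun := fun q => ⟨(q.1.1, fun x y => q.1.2 x y ∨ (x = u₀ ∧ y = w₀)), ?_⟩
      left_inv := ?_
      right_inv := ?_ }
  · obtain ⟨⟨hnv, z, hz⟩, hs⟩ := p.2
    refine ⟨⟨?_, z, realizes_del hz⟩, z, realizes_del hz, (hz.2.2 u₀ w₀ hadj).mp hs⟩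
    intro x y hnadj hρ
    by_cases hH : H.Adj x y
    · by_cases hp1 : x = u₀ ∧ y = w₀
      · exact hρ.2.1 hp1
      · by_cases hp2 : x = w₀ ∧ y = u₀
        · exact hρ.2.2 hp2
        · exact hnadj (del_adj.mpr ⟨hH, hp1, hp2⟩)
    · exact hnv x y hH hρ.1
  · obtain ⟨⟨hnv, _⟩, z, hz, hzlt⟩ := q.2
    have hKH : ∀ x y, (H.deleteEdges {s(u₀, w₀)}).Adj x y → H.Adj x y := fun x y h =>
      (del_adj.mp h).1
    refine ⟨⟨?_, z, ⟨hz.1, ?_, ?_⟩⟩, Or.inr ⟨rfl, rfl⟩⟩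
    · rintro x y hnadj (hs | ⟨rfl, rfl⟩)
      · exact hnv x y (fun h => hnadj (hKH x y h)) hs
      · exact hnadj hadj
    · intro x y hH
      by_cases hp1 : x = u₀ ∧ y = w₀
      · obtain ⟨rfl, rfl⟩ := hp1; exact ne_of_lt hzlt
      · by_cases hp2 : x = w₀ ∧ y = u₀
        · obtain ⟨rfl, rfl⟩ := hp2; exact hzlt.ne'
        · exact hz.2.1 x y (del_adj.mpr ⟨hH, hp1, hp2⟩)
    · intro x y hH
      by_cases hp1 : x = u₀ ∧ y = w₀
      · obtain ⟨rfl, rfl⟩ := hp1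
        exact ⟨fun _ => hzlt, fun _ => Or.inr ⟨rfl, rfl⟩⟩
      · by_cases hp2 : x = w₀ ∧ y = u₀
        · obtain ⟨rfl, rfl⟩ := hp2
          refine iff_of_false ?_ (by intro hc; exact absurd hzlt (not_lt.mpr (le_of_lt hc)))
          rintro (hs | ⟨he, _⟩)
          · exact hnv x y (fun h => (del_adj.mp h).2.2 ⟨rfl, rfl⟩) hs
          · exact hadj.ne' he
        · have hd : (H.deleteEdges {s(u₀, w₀)}).Adj x y := del_adj.mpr ⟨hH, hp1, hp2⟩
          constructor
          · rintro (hs | hpair)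
            · exact (hz.2.2 x y hd).mp hs
            · exact absurd hpair hp1
          · intro hlt
            exact Or.inl ((hz.2.2 x y hd).mpr hlt)
  · rintro ⟨⟨c, s⟩, hmem, hs⟩
    apply Subtype.ext
    refine congrArg (Prod.mk c) (propfun_ext fun x y => ?_)
    constructor
    · rintro (⟨h1, _, _⟩ | ⟨rfl, rfl⟩)
      · exact h1
      · exact hs
    · intro hsxy
      by_cases hp1 : x = u₀ ∧ y = w₀
      · exact Or.inr hp1
      · by_cases hp2 : x = w₀ ∧ y = u₀
        · obtain ⟨rfl, rfl⟩ := hp2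
          exfalso
          obtain ⟨hnv, z, hz⟩ := hmem
          have h1 := (hz.2.2 x y hadj.symm).mp hsxy
          have h2 := (hz.2.2 y x hadj).mp hs
          linarith
        · exact Or.inl ⟨hsxy, hp1, hp2⟩
  · rintro ⟨⟨c, s'⟩, hmem, hup⟩
    apply Subtype.ext
    refine congrArg (Prod.mk c) (propfun_ext fun x y => ?_)
    constructor
    · rintro ⟨(hs | hpair), np1, np2⟩
      · exact hs
      · exact absurd hpair np1
    · intro hs'
      have hd : (H.deleteEdges {s(u₀, w₀)}).Adj x y := by
        by_contra hc
        exact hmem.1 x y hc hs'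
      exact ⟨Or.inl hs', (del_adj.mp hd).2.1, (del_adj.mp hd).2.2⟩

end DDC

section DDC2
variable {W : Type*} [Fintype W] {kk : ℕ} {H : SimpleGraph W} {u₀ w₀ : W}

lemma same_box {a b : Fin kk} {r : ℝ}
    (ha : r ∈ Set.Ioo (((a : ℕ) : ℝ)) (((a : ℕ) : ℝ) + 1))
    (hb : r ∈ Set.Ioo (((b : ℕ) : ℝ)) (((b : ℕ) : ℝ) + 1)) : a = b := by
  apply Fin.ext
  by_contra hne
  rcases Nat.lt_or_ge (a : ℕ) (b : ℕ) with h | h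
  · have : ((a : ℕ) : ℝ) + 1 ≤ ((b : ℕ) : ℝ) := by exact_mod_cast Nat.succ_le_of_lt h
    have := ha.2
    have := hb.1
    linarith
  · rcases Nat.eq_or_lt_of_le h with h' | h'
    · exact hne h'.symm
    · have : ((b : ℕ) : ℝ) + 1 ≤ ((a : ℕ) : ℝ) := by exact_mod_cast Nat.succ_le_of_lt h'
      have := hb.2
      have := ha.1
      linarith

/-- realization of the φ-image data on the contracted graph -/
lemma phi_realizes (hadj : H.Adj u₀ w₀) {c : W → Fin kk} {s' : W → W → Prop} {z : W → ℝ}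
    (hnv : ∀ x y, ¬(H.deleteEdges {s(u₀, w₀)}).Adj x y → ¬ s' x y)
    (hz : Realizes (H.deleteEdges {s(u₀, w₀)}) kk c s' z) (htie : z u₀ = z w₀) :
    Realizes (Hcon H u₀ w₀) kk (fun x => c ↑x)
      (fun x y : {x : W // x ≠ w₀} => s' ↑x ↑y ∨ ((x : W) = u₀ ∧ s' w₀ ↑y) ∨
        ((y : W) = u₀ ∧ s' ↑x w₀)) (fun x => z ↑x) ∧
    (∀ x y : {x : W // x ≠ w₀}, ¬ (Hcon H u₀ w₀).Adj x y →
      ¬ (s' ↑x ↑y ∨ ((x : W) = u₀ ∧ s' w₀ ↑y) ∨ ((y : W) = u₀ ∧ s' ↑x w₀))) := by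
  have sval : ∀ x y, s' x y → (H.deleteEdges {s(u₀, w₀)}).Adj x y := by
    intro x y hs
    by_contra hcon
    exact hnv x y hcon hs
  have siff := hz.2.2
  have hsub : ∀ x y : {x : W // x ≠ w₀}, H.Adj ↑x ↑y → (H.deleteEdges {s(u₀, w₀)}).Adj ↑x ↑y := by
    intro x y h
    exact del_adj.mpr ⟨h, fun hc => y.2 hc.2, fun hc => x.2 hc.1⟩
  have hw0y : ∀ y : {x : W // x ≠ w₀}, H.Adj w₀ ↑y → (y : W) ≠ u₀ →
      (H.deleteEdges {s(u₀, w₀)}).Adj w₀ ↑y := by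
    intro y h hyu
    exact del_adj.mpr ⟨h, fun hc => hadj.ne' hc.1, fun hc => hyu hc.2⟩
  have hDi : ∀ x y : {x : W // x ≠ w₀},
      (s' ↑x ↑y ∨ ((x : W) = u₀ ∧ s' w₀ ↑y) ∨ ((y : W) = u₀ ∧ s' ↑x w₀)) → z ↑x < z ↑y := by
    rintro x y (h1 | ⟨hx, h2⟩ | ⟨hy, h3⟩)
    · exact (siff _ _ (sval _ _ h1)).mp h1
    · have := (siff _ _ (sval _ _ h2)).mp h2
      rw [hx, htie]
      exact this
    · have := (siff _ _ (sval _ _ h3)).mp h3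
      rw [hy, htie]
      exact this
  refine ⟨⟨fun v => hz.1 ↑v, ?_, ?_⟩, ?_⟩
  · intro x y hcadj
    show z ↑x ≠ z ↑y
    rcases hcadj with h | ⟨hx, hyne, hwy⟩ | ⟨hy, hxne, hwx⟩
    · exact hz.2.1 _ _ (hsub x y h)
    · rw [hx, htie]
      exact hz.2.1 _ _ (hw0y y hwy hyne)
    · rw [hy, htie]
      exact (hz.2.1 _ _ (hw0y x hwx hxne)).symm
  · intro x y hcadj
    constructor
    · exact hDi x y
    · intro hlt
      rcases hcadj with h | ⟨hx, hyne, hwy⟩ | ⟨hy, hxne, hwx⟩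
      · exact Or.inl ((siff _ _ (hsub x y h)).mpr hlt)
      · refine Or.inr (Or.inl ⟨hx, (siff w₀ ↑y (hw0y y hwy hyne)).mpr ?_⟩)
        rw [← htie, ← hx]
        exact hlt
      · refine Or.inr (Or.inr ⟨hy, (siff ↑x w₀ (hw0y x hwx hxne).symm).mpr ?_⟩)
        rw [← htie, ← hy]
        exact hlt
  · rintro x y hnadj (h1 | ⟨hx, h2⟩ | ⟨hy, h3⟩)
    · exact hnadj (Or.inl (del_adj.mp (sval _ _ h1)).1)
    · have hd := sval _ _ h2
      have := del_adj.mp hd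
      exact hnadj (Or.inr (Or.inl ⟨hx, fun hc => this.2.2 ⟨rfl, hc⟩, this.1⟩))
    · have hd := sval _ _ h3
      have := del_adj.mp hd
      have hd2 := del_adj.mp hd.symm
      exact hnadj (Or.inr (Or.inr ⟨hy, fun hc => this.2.1 ⟨hc, rfl⟩, hd2.1⟩))

/-- realization of the ψ-image data on the deleted graph, with a tie -/
lemma psi_realizes (hadj : H.Adj u₀ w₀) {c'' : {x : W // x ≠ w₀} → Fin kk}
    {s'' : {x : W // x ≠ w₀} → {x : W // x ≠ w₀} → Prop} {z'' : {x : W // x ≠ w₀} → ℝ}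
    (hz'' : Realizes (Hcon H u₀ w₀) kk c'' s'' z'') :
    Realizes (H.deleteEdges {s(u₀, w₀)}) kk (fun x => c'' (conπ u₀ w₀ hadj.ne x))
      (fun x y => (H.deleteEdges {s(u₀, w₀)}).Adj x y ∧
        s'' (conπ u₀ w₀ hadj.ne x) (conπ u₀ w₀ hadj.ne y))
      (fun x => z'' (conπ u₀ w₀ hadj.ne x)) ∧
    z'' (conπ u₀ w₀ hadj.ne u₀) = z'' (conπ u₀ w₀ hadj.ne w₀) := by
  constructor
  · refine ⟨fun v => hz''.1 _, ?_, ?_⟩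
    · intro x y hd
      exact hz''.2.1 _ _ (adj_conπ hadj.ne hd)
    · intro x y hd
      constructor
      · rintro ⟨_, hs⟩
        exact (hz''.2.2 _ _ (adj_conπ hadj.ne hd)).mp hs
      · intro hlt
        exact ⟨hd, (hz''.2.2 _ _ (adj_conπ hadj.ne hd)).mpr hlt⟩
  · rw [conπ_w₀ hadj.ne, conπ_of_ne hadj.ne hadj.ne]

lemma card_tie (hadj : H.Adj u₀ w₀) :
    Nat.card {q : (W → Fin kk) × (W → W → Prop) // q ∈ DD (H.deleteEdges {s(u₀, w₀)}) kk ∧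
        ∃ z, Realizes (H.deleteEdges {s(u₀, w₀)}) kk q.1 q.2 z ∧ z u₀ = z w₀}
      = Nat.card {p : ({x : W // x ≠ w₀} → Fin kk) ×
          ({x : W // x ≠ w₀} → {x : W // x ≠ w₀} → Prop) // p ∈ DD (Hcon H u₀ w₀) kk} := by
  have hne := hadj.ne
  apply Nat.card_congr
  refine
    { toFun := fun q => ⟨((fun x => q.1.1 ↑x),
        (fun x y => q.1.2 ↑x ↑y ∨ ((x : W) = u₀ ∧ q.1.2 w₀ ↑y) ∨
          ((y : W) = u₀ ∧ q.1.2 ↑x w₀))), ?_⟩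
      invFun := fun p => ⟨((fun x => p.1.1 (conπ u₀ w₀ hne x)),
        (fun x y => (H.deleteEdges {s(u₀, w₀)}).Adj x y ∧
          p.1.2 (conπ u₀ w₀ hne x) (conπ u₀ w₀ hne y))), ?_⟩
      left_inv := ?_
      right_inv := ?_ }
  · obtain ⟨⟨hnv, _⟩, z, hz, htie⟩ := q.2
    have h := phi_realizes hadj hnv hz htie
    exact ⟨h.2, ⟨_, h.1⟩⟩
  · obtain ⟨hnv, z'', hz''⟩ := p.2
    have h := psi_realizes hadj hz''
    refine ⟨⟨fun x y hd hs => hd hs.1, ⟨_, h.1⟩⟩, ⟨_, h.1, h.2⟩⟩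
  · rintro ⟨⟨c, s'⟩, hmem, z, hz, htie⟩
    obtain ⟨hnv, -⟩ := hmem
    have hφ := phi_realizes hadj hnv hz htie
    have sval : ∀ x y, s' x y → (H.deleteEdges {s(u₀, w₀)}).Adj x y := by
      intro x y hs
      by_contra hcon
      exact hnv x y hcon hs
    have hπz : ∀ x, z ↑(conπ u₀ w₀ hne x) = z x := by
      intro x
      by_cases hx : x = w₀
      · rw [hx, conπ_w₀ hne]
        exact htie
      · rw [conπ_of_ne hne hx]
    apply Subtype.ext
    simp only []
    have hc : (fun x => c ↑(conπ u₀ w₀ hne x)) = c := by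
      funext x
      by_cases hx : x = w₀
      · rw [hx, conπ_w₀ hne]
        exact same_box (hz.1 u₀) (htie ▸ hz.1 w₀)
      · rw [conπ_of_ne hne hx]
    rw [hc]
    refine congrArg (Prod.mk c) (propfun_ext fun x y => ?_)
    constructor
    · rintro ⟨hd, hphi⟩
      refine (hz.2.2 x y hd).mpr ?_
      have := (hφ.1.2.2 _ _ (adj_conπ hne hd)).mp hphi
      simp only [hπz] at this
      exact this
    · intro hs'
      have hd := sval x y hs'
      refine ⟨hd, (hφ.1.2.2 _ _ (adj_conπ hne hd)).mpr ?_⟩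
      simp only [hπz]
      exact (hz.2.2 x y hd).mp hs'
  · rintro ⟨⟨c'', s''⟩, hnv, z'', hz''⟩
    have hψ := psi_realizes hadj hz''
    have hφψ := phi_realizes hadj (c := fun x => c'' (conπ u₀ w₀ hne x))
      (fun x y hd hs => hd hs.1) hψ.1 hψ.2
    have hπval : ∀ x : {x : W // x ≠ w₀}, conπ u₀ w₀ hne ↑x = x := by
      intro x
      rw [conπ_of_ne hne x.2]
    apply Subtype.ext
    simp only []
    have hc : (fun x : {x : W // x ≠ w₀} => c'' (conπ u₀ w₀ hne ↑x)) = c'' := by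
      funext x
      rw [hπval]
    rw [hc]
    refine congrArg (Prod.mk c'') (propfun_ext fun x y => ?_)
    by_cases hcadj : (Hcon H u₀ w₀).Adj x y
    · have l1 := hφψ.1.2.2 x y hcadj
      have l2 := hz''.2.2 x y hcadj
      simp only [hπval] at l1 ⊢
      exact l1.trans l2.symm
    · exact iff_of_false (hφψ.2 x y hcadj) (hnv x y hcadj)

end DDC2

section DDC3
variable {W : Type*} [Fintype W] {kk : ℕ} {H : SimpleGraph W} {u₀ w₀ : W}

theorem DD_DC (hadj : H.Adj u₀ w₀) :
    Nat.card {p : (W → Fin kk) × (W → W → Prop) // p ∈ DD H kk}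
      = Nat.card {p : (W → Fin kk) × (W → W → Prop) // p ∈ DD (H.deleteEdges {s(u₀, w₀)}) kk}
        + Nat.card {p : ({x : W // x ≠ w₀} → Fin kk) ×
            ({x : W // x ≠ w₀} → {x : W // x ≠ w₀} → Prop) // p ∈ DD (Hcon H u₀ w₀) kk} := by
  have split := card_split (fun p : (W → Fin kk) × (W → W → Prop) => p ∈ DD H kk)
    (fun p => p.2 u₀ w₀)
  have a1 := card_up (kk := kk) hadj
  have a2 : Nat.card {p : (W → Fin kk) × (W → W → Prop) // p ∈ DD H kk ∧ ¬ p.2 u₀ w₀}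
      = Nat.card {p : (W → Fin kk) × (W → W → Prop) // p ∈ DD H kk ∧ p.2 w₀ u₀} := by
    apply Nat.card_congr
    apply Equiv.subtypeEquivRight
    intro p
    constructor
    · rintro ⟨hm, hns⟩
      refine ⟨hm, ?_⟩
      obtain ⟨hnv, z, hz⟩ := hm
      rw [hz.2.2 w₀ u₀ hadj.symm]
      rcases lt_or_gt_of_ne (hz.2.1 u₀ w₀ hadj) with h | h
      · exact absurd ((hz.2.2 u₀ w₀ hadj).mpr h) hns
      · exact h
    · rintro ⟨hm, hs⟩
      refine ⟨hm, ?_⟩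
      obtain ⟨hnv, z, hz⟩ := hm
      intro hcon
      have h1 := (hz.2.2 u₀ w₀ hadj).mp hcon
      have h2 := (hz.2.2 w₀ u₀ hadj.symm).mp hs
      linarith
  have a3 := card_up (kk := kk) hadj.symm
  rw [show (s(w₀, u₀) : Sym2 W) = s(u₀, w₀) from Sym2.eq_swap] at a3
  have a4 := card_or_and (fun p : (W → Fin kk) × (W → W → Prop) =>
      p ∈ DD (H.deleteEdges {s(u₀, w₀)}) kk)
    (fun q => ∃ z, Realizes (H.deleteEdges {s(u₀, w₀)}) kk q.1 q.2 z ∧ z u₀ < z w₀)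
    (fun q => ∃ z, Realizes (H.deleteEdges {s(u₀, w₀)}) kk q.1 q.2 z ∧ z w₀ < z u₀)
    (fun q hq => up_or_down hadj.ne hq.2)
  have a5 : Nat.card {q : (W → Fin kk) × (W → W → Prop) //
      q ∈ DD (H.deleteEdges {s(u₀, w₀)}) kk ∧
        (∃ z, Realizes (H.deleteEdges {s(u₀, w₀)}) kk q.1 q.2 z ∧ z u₀ < z w₀) ∧
        (∃ z, Realizes (H.deleteEdges {s(u₀, w₀)}) kk q.1 q.2 z ∧ z w₀ < z u₀)}
      = Nat.card {q : (W → Fin kk) × (W → W → Prop) //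
          q ∈ DD (H.deleteEdges {s(u₀, w₀)}) kk ∧
          ∃ z, Realizes (H.deleteEdges {s(u₀, w₀)}) kk q.1 q.2 z ∧ z u₀ = z w₀} := by
    apply Nat.card_congr
    apply Equiv.subtypeEquivRight
    intro q
    constructor
    · rintro ⟨hm, hup, hdn⟩
      exact ⟨hm, tie_of_both hup hdn⟩
    · rintro ⟨hm, htie⟩
      have := both_of_tie hadj.ne htie
      exact ⟨hm, this.1, this.2⟩
  have a6 := card_tie (kk := kk) hadj
  rw [split, a1, a2, a3, a4, a5, a6]

theorem CP_DC (hadj : H.Adj u₀ w₀) :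
    CP (H.deleteEdges {s(u₀, w₀)}) = CP H + CP (Hcon H u₀ w₀) := by
  apply poly_ext
  intro k
  rw [Polynomial.eval_add, CP_eval, CP_eval, CP_eval, count_DC hadj k]
  push_cast
  ring

lemma card_DD_bot (h : H = ⊥) :
    Nat.card {p : (W → Fin kk) × (W → W → Prop) // p ∈ DD H kk} = kk ^ Fintype.card W := by
  have e : {p : (W → Fin kk) × (W → W → Prop) // p ∈ DD H kk} ≃ (W → Fin kk) :=
    { toFun := fun p => p.1.1
      invFun := fun c => ⟨(c, fun _ _ => False), ⟨fun _ _ _ hf => hf,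
        ⟨fun v => ((c v : ℕ) : ℝ) + 1/2, fun v => ⟨by norm_num, by norm_num⟩,
          fun u w hadj => absurd hadj (by rw [h]; exact fun hc => hc),
          fun u w hadj => absurd hadj (by rw [h]; exact fun hc => hc)⟩⟩⟩
      left_inv := fun p => by
        apply Subtype.ext
        refine congrArg (Prod.mk p.1.1) (propfun_ext fun x y => ?_)
        exact iff_of_false (fun hf => hf) (p.2.1 x y (by rw [h]; exact fun hc => hc))
      right_inv := fun c => rfl }
  rw [Nat.card_congr e, Nat.card_fun, Nat.card_eq_fintype_card, Nat.card_eq_fintype_card,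
    Fintype.card_fin]

end DDC3

theorem card_DD_eq (kk : ℕ) : ∀ (N : ℕ) (W : Type u) [Fintype W] (H : SimpleGraph W),
    H.edgeFinset.card ≤ N →
    (Nat.card {p : (W → Fin kk) × (W → W → Prop) // p ∈ DD H kk} : ℤ)
      = (-1) ^ (Fintype.card W) * (CP H).eval (-(kk : ℤ)) := by
  intro N
  induction N with
  | zero =>
    intro W _ H hcard
    have hE : H.edgeFinset = ∅ := Finset.card_eq_zero.mp (Nat.le_zero.mp hcard)
    have hbot : H = ⊥ := by
      ext x y
      simp only [SimpleGraph.bot_adj, iff_false]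
      intro hadj
      have : s(x, y) ∈ H.edgeFinset := SimpleGraph.mem_edgeFinset.mpr hadj
      rw [hE] at this
      exact absurd this (Finset.notMem_empty _)
    rw [card_DD_bot hbot, CP_bot' hbot]
    rw [Polynomial.eval_pow, Polynomial.eval_X, ← mul_pow]
    push_cast
    ring
  | succ n ih =>
    intro W _ H hcard
    by_cases hE : H.edgeFinset = ∅
    · have hbot : H = ⊥ := by
        ext x y
        simp only [SimpleGraph.bot_adj, iff_false]
        intro hadj
        have : s(x, y) ∈ H.edgeFinset := SimpleGraph.mem_edgeFinset.mpr hadj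
        rw [hE] at this
        exact absurd this (Finset.notMem_empty _)
      rw [card_DD_bot hbot, CP_bot' hbot]
      rw [Polynomial.eval_pow, Polynomial.eval_X, ← mul_pow]
      push_cast
      ring
    · obtain ⟨e, he⟩ := Finset.nonempty_of_ne_empty hE
      revert he
      refine Sym2.ind ?_ e
      intro u₀ w₀ he
      have hadj : H.Adj u₀ w₀ := SimpleGraph.mem_edgeFinset.mp he
      have hne : u₀ ≠ w₀ := hadj.ne
      -- edge counts
      have hsubdel : (H.deleteEdges {s(u₀, w₀)}).edgeFinset ⊆ H.edgeFinset.erase s(u₀, w₀) := by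
        intro f hf
        rw [SimpleGraph.mem_edgeFinset, SimpleGraph.edgeSet_deleteEdges] at hf
        rw [Finset.mem_erase, SimpleGraph.mem_edgeFinset]
        exact ⟨hf.2, hf.1⟩
      have herase : (H.edgeFinset.erase s(u₀, w₀)).card ≤ n := by
        rw [Finset.card_erase_of_mem he]
        omega
      have hdelcard : (H.deleteEdges {s(u₀, w₀)}).edgeFinset.card ≤ n :=
        le_trans (Finset.card_le_card hsubdel) herase
      have hconcard : (Hcon H u₀ w₀).edgeFinset.card ≤ n := by
        refine le_trans (Finset.card_le_card_of_surjOn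
          (Sym2.map (fun x => conπ u₀ w₀ hne x)) ?_) herase
        intro b hb
        simp only [Finset.coe_erase, Set.mem_image, Finset.mem_coe, Set.mem_diff,
          Set.mem_singleton_iff]
        revert hb
        refine Sym2.ind ?_ b
        intro x y hb
        rw [Finset.mem_coe, SimpleGraph.mem_edgeFinset] at hb
        rw [SimpleGraph.mem_edgeSet] at hb
        rcases hb with h | ⟨hx, hyne, hwy⟩ | ⟨hy, hxne, hwx⟩
        · refine ⟨s(↑x, ↑y), ⟨SimpleGraph.mem_edgeFinset.mpr h, ?_⟩, ?_⟩
          · intro hc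
            rw [Sym2.eq_iff] at hc
            rcases hc with ⟨_, hc2⟩ | ⟨hc1, _⟩
            · exact y.2 hc2
            · exact x.2 hc1
          · rw [Sym2.map_pair_eq]
            rw [conπ_of_ne hne x.2, conπ_of_ne hne y.2, Subtype.eta, Subtype.eta]
        · refine ⟨s(w₀, ↑y), ⟨SimpleGraph.mem_edgeFinset.mpr hwy, ?_⟩, ?_⟩
          · intro hc
            rw [Sym2.eq_iff] at hc
            rcases hc with ⟨hc1, _⟩ | ⟨_, hc2⟩
            · exact hne hc1.symm
            · exact hyne hc2
          · rw [Sym2.map_pair_eq, conπ_w₀ hne, conπ_of_ne hne y.2, Subtype.eta]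
            have hxx : (⟨u₀, hne⟩ : {x : W // x ≠ w₀}) = x := Subtype.ext hx.symm
            rw [hxx]
        · refine ⟨s(w₀, ↑x), ⟨SimpleGraph.mem_edgeFinset.mpr hwx, ?_⟩, ?_⟩
          · intro hc
            rw [Sym2.eq_iff] at hc
            rcases hc with ⟨hc1, _⟩ | ⟨_, hc2⟩
            · exact hne hc1.symm
            · exact hxne hc2
          · rw [Sym2.map_pair_eq, conπ_w₀ hne, conπ_of_ne hne x.2, Subtype.eta]
            rw [Sym2.eq_swap]
            have hyy : (⟨u₀, hne⟩ : {x : W // x ≠ w₀}) = y := Subtype.ext hy.symm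
            rw [hyy]
      -- cardinality of the contracted vertex set
      have hW' : Fintype.card W = Fintype.card {x : W // x ≠ w₀} + 1 := by
        have h1 : Fintype.card {x : W // x ≠ w₀} = Fintype.card W - 1 := by
          have := Fintype.card_subtype_compl (fun x : W => x = w₀)
          rw [Fintype.card_subtype_eq] at this
          exact this
        have h2 : 1 ≤ Fintype.card W := Fintype.card_pos_iff.mpr ⟨w₀⟩
        omega
      have ihdel := ih W (H.deleteEdges {s(u₀, w₀)}) (by convert hdelcard)
      have ihcon := ih {x : W // x ≠ w₀} (Hcon H u₀ w₀) (by convert hconcard)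
      have hdc := DD_DC (kk := kk) hadj
      have hcp := CP_DC hadj
      have hcpe : (CP (H.deleteEdges {s(u₀, w₀)})).eval (-(kk : ℤ))
          = (CP H).eval (-(kk : ℤ)) + (CP (Hcon H u₀ w₀)).eval (-(kk : ℤ)) := by
        rw [hcp, Polynomial.eval_add]
      rw [hdc]
      push_cast
      rw [ihdel, ihcon, hcpe, hW']
      ring

section Geom
variable {V : Type*} [Fintype V] {G : SimpleGraph V} {m : ℕ}

lemma sign_const {S : Set (V → ℝ)} (hS : IsPreconnected S) {f : (V → ℝ) → ℝ}
    (hf : Continuous f) (h0 : ∀ z ∈ S, f z ≠ 0) {x y : V → ℝ} (hx : x ∈ S) (hy : y ∈ S)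
    (hneg : f x < 0) : f y < 0 := by
  by_contra hc
  push_neg at hc
  have hmem : (0 : ℝ) ∈ Set.Icc (f x) (f y) := ⟨le_of_lt hneg, hc⟩
  obtain ⟨z, hz, hz0⟩ := hS.intermediate_value hx hy hf.continuousOn hmem
  exact h0 z hz hz0

lemma comp_edge_sign {x y : V → ℝ} (hxF : x ∈ arrComplement G m)
    (hy : y ∈ connectedComponentIn (arrComplement G m) x) {u w : V} (hadj : G.Adj u w) :
    x u < x w ↔ y u < y w := by
  have hS := isPreconnected_connectedComponentIn (F := arrComplement G m) (x := x)
  have hsub := connectedComponentIn_subset (arrComplement G m) x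
  have hx : x ∈ connectedComponentIn (arrComplement G m) x := mem_connectedComponentIn hxF
  have hf : Continuous (fun z : V → ℝ => z u - z w) := (continuous_apply u).sub (continuous_apply w)
  have h0 : ∀ z ∈ connectedComponentIn (arrComplement G m) x, z u - z w ≠ 0 := fun z hz =>
    sub_ne_zero.mpr ((hsub hz).1 u w hadj)
  constructor
  · intro h
    have := sign_const hS hf h0 hx hy (by linarith)
    linarith
  · intro h
    have := sign_const hS hf h0 hy hx (by linarith)
    linarith

lemma comp_wall_sign {x y : V → ℝ} (hxF : x ∈ arrComplement G m)
    (hy : y ∈ connectedComponentIn (arrComplement G m) x) (v : V) {i : ℕ} (hi : i ≤ m - 2) :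
    x v < i ↔ y v < i := by
  have hS := isPreconnected_connectedComponentIn (F := arrComplement G m) (x := x)
  have hsub := connectedComponentIn_subset (arrComplement G m) x
  have hx : x ∈ connectedComponentIn (arrComplement G m) x := mem_connectedComponentIn hxF
  have hf : Continuous (fun z : V → ℝ => z v - (i : ℝ)) := (continuous_apply v).sub continuous_const
  have h0 : ∀ z ∈ connectedComponentIn (arrComplement G m) x, z v - (i : ℝ) ≠ 0 := fun z hz =>
    sub_ne_zero.mpr ((hsub hz).2 v i hi)
  constructor
  · intro h
    have := sign_const hS hf h0 hx hy (by linarith)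
    linarith
  · intro h
    have := sign_const hS hf h0 hy hx (by linarith)
    linarith

lemma realizes_mem_arr {c : V → Fin (m - 2)} {s : V → V → Prop} {z : V → ℝ}
    (hz : Realizes G (m - 2) c s z) : z ∈ arrComplement G m := by
  refine ⟨hz.2.1, ?_⟩
  intro v i hi
  rcases le_or_gt i ((c v : ℕ)) with h | h
  · have h1 : (i : ℝ) ≤ ((c v : ℕ) : ℝ) := Nat.cast_le.mpr h
    have h2 := (hz.1 v).1
    intro hc
    linarith
  · have h1 : ((c v : ℕ) : ℝ) + 1 ≤ (i : ℝ) := by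
      have : (c v : ℕ) + 1 ≤ i := h
      exact_mod_cast this
    have h2 := (hz.1 v).2
    intro hc
    linarith

lemma comp_bounded {c : V → Fin (m - 2)} {s : V → V → Prop} {z : V → ℝ}
    (hz : Realizes G (m - 2) c s z) :
    Bornology.IsBounded (connectedComponentIn (arrComplement G m) z) := by
  have hzF : z ∈ arrComplement G m := realizes_mem_arr hz
  apply Bornology.IsBounded.subset (Metric.isBounded_closedBall (x := (0 : V → ℝ))
    (r := ((m - 2 : ℕ) : ℝ)))
  intro y hy
  rw [Metric.mem_closedBall]
  rw [dist_pi_le_iff (Nat.cast_nonneg _)]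
  intro v
  rw [Real.dist_eq]
  have hcv1 : ((c v : ℕ)) + 1 ≤ m - 2 := (c v).2
  have hylt : y v < ((c v : ℕ) : ℝ) + 1 := by
    have hiw : ((c v : ℕ) + 1) ≤ m - 2 := hcv1
    have := (comp_wall_sign hzF hy v hiw).mp (by
      push_cast
      have := (hz.1 v).2
      push_cast at this
      linarith)
    push_cast at this
    linarith
  have hyge : (0 : ℝ) ≤ y v := by
    by_contra hc
    push_neg at hc
    have h0w : (0 : ℕ) ≤ m - 2 := Nat.zero_le _
    have := (comp_wall_sign hzF hy v h0w).mpr (by exact_mod_cast hc)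
    have h2 := (hz.1 v).1
    have h3 : (0 : ℝ) ≤ ((c v : ℕ) : ℝ) := Nat.cast_nonneg _
    simp only [Nat.cast_zero] at this
    linarith
  rw [Pi.zero_apply, sub_zero, abs_of_nonneg hyge]
  have : ((c v : ℕ) : ℝ) + 1 ≤ ((m - 2 : ℕ) : ℝ) := by exact_mod_cast hcv1
  linarith

lemma realizes_same_comp {c : V → Fin (m - 2)} {s : V → V → Prop} {z z' : V → ℝ}
    (h1 : Realizes G (m - 2) c s z) (h2 : Realizes G (m - 2) c s z') :
    connectedComponentIn (arrComplement G m) z = connectedComponentIn (arrComplement G m) z' := by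
  have hz'mem : z' ∈ connectedComponentIn (arrComplement G m) z := by
    have hconn : IsPreconnected ((fun t : ℝ => fun v => z v + t * (z' v - z v)) ''
        Set.Icc (0 : ℝ) 1) := by
      apply IsPreconnected.image isPreconnected_Icc
      apply Continuous.continuousOn
      apply continuous_pi
      intro v
      exact continuous_const.add (continuous_id.mul continuous_const)
    have hsubF : ((fun t : ℝ => fun v => z v + t * (z' v - z v)) '' Set.Icc (0 : ℝ) 1)
        ⊆ arrComplement G m := by
      rintro _ ⟨t, ht, rfl⟩
      exact realizes_mem_arr (realizes_combo h1 h2 ht.1 ht.2)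
    have hzin : z ∈ ((fun t : ℝ => fun v => z v + t * (z' v - z v)) '' Set.Icc (0 : ℝ) 1) :=
      ⟨0, ⟨le_refl 0, by norm_num⟩, funext fun v => by ring⟩
    have := hconn.subset_connectedComponentIn hzin hsubF
    exact this ⟨1, ⟨by norm_num, le_refl 1⟩, funext fun v => by ring⟩
  exact connectedComponentIn_eq hz'mem

end Geom

section Geom2
variable {V : Type*} [Fintype V] {G : SimpleGraph V} {m : ℕ}

lemma coords_box {x : V → ℝ} (hxF : x ∈ arrComplement G m)
    (hbd : Bornology.IsBounded (connectedComponentIn (arrComplement G m) x)) (v : V) :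
    ∃ c : ℕ, c < m - 2 ∧ (c : ℝ) < x v ∧ x v < (c : ℝ) + 1 := by
  set k : ℕ := m - 2 with hkdef
  have hk0 : (0 : ℝ) ≤ ((k : ℕ) : ℝ) := Nat.cast_nonneg _
  set δ : V → ℝ := fun w => if ((k : ℕ) : ℝ) < x w then 1 else if x w < 0 then -1 else 0 with hδ
  have hwall0 : ∀ w, x w ≠ 0 := by
    intro w
    have := hxF.2 w 0 (Nat.zero_le _)
    simpa using this
  have hwallk : ∀ w, x w ≠ ((k : ℕ) : ℝ) := fun w => hxF.2 w k (le_refl _)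
  have htri : ∀ w, (δ w = 1 ∧ ((k : ℕ) : ℝ) < x w) ∨ (δ w = -1 ∧ x w < 0) ∨
      (δ w = 0 ∧ 0 < x w ∧ x w < ((k : ℕ) : ℝ)) := by
    intro w
    by_cases h1 : ((k : ℕ) : ℝ) < x w
    · left
      exact ⟨by rw [hδ]; simp only []; rw [if_pos h1], h1⟩
    · by_cases h2 : x w < 0
      · right; left
        exact ⟨by rw [hδ]; simp only []; rw [if_neg h1, if_pos h2], h2⟩
      · right; right
        push_neg at h1 h2
        refine ⟨by rw [hδ]; simp only []; rw [if_neg (not_lt.mpr h1), if_neg (not_lt.mpr h2)],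
          lt_of_le_of_ne h2 (Ne.symm (hwall0 w)), lt_of_le_of_ne h1 (hwallk w)⟩
  have hmemray : ∀ t : ℝ, 0 ≤ t → (fun w => x w + t * δ w) ∈ arrComplement G m := by
    intro t ht
    constructor
    · intro u w hadj
      have hxne := hxF.1 u w hadj
      show x u + t * δ u ≠ x w + t * δ w
      rcases htri u with ⟨hdu, hxu⟩ | ⟨hdu, hxu⟩ | ⟨hdu, hxu⟩ <;>
        rcases htri w with ⟨hdw, hxw⟩ | ⟨hdw, hxw⟩ | ⟨hdw, hxw⟩ <;>
        rw [hdu, hdw] <;>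
        simp only [mul_one, mul_zero, mul_neg_one, add_zero] <;>
        intro hc <;>
        first
          | exact hxne (by linarith)
          | linarith [hxw.1, hxw.2]
          | linarith [hxu.1, hxu.2]
          | linarith
    · intro w i hi
      have hik : ((i : ℕ) : ℝ) ≤ ((k : ℕ) : ℝ) := Nat.cast_le.mpr hi
      have hi0 : (0 : ℝ) ≤ ((i : ℕ) : ℝ) := Nat.cast_nonneg _
      have hwne := hxF.2 w i hi
      show x w + t * δ w ≠ (i : ℝ)
      rcases htri w with ⟨hdw, hxw⟩ | ⟨hdw, hxw⟩ | ⟨hdw, hxw⟩ <;>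
        rw [hdw] <;>
        simp only [mul_one, mul_zero, mul_neg_one, add_zero] <;>
        intro hc
      · linarith
      · linarith
      · exact hwne hc
  have hray : ∀ t : ℝ, 0 ≤ t →
      (fun w => x w + t * δ w) ∈ connectedComponentIn (arrComplement G m) x := by
    intro t ht
    have hconn : IsPreconnected ((fun r : ℝ => fun w => x w + r * δ w) '' Set.Icc 0 t) := by
      apply IsPreconnected.image isPreconnected_Icc
      apply Continuous.continuousOn
      apply continuous_pi
      intro w
      exact continuous_const.add (continuous_id.mul continuous_const)
    have hsubF : ((fun r : ℝ => fun w => x w + r * δ w) '' Set.Icc 0 t) ⊆ arrComplement G m := by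
      rintro _ ⟨r, hr, rfl⟩
      exact hmemray r hr.1
    have hxin : x ∈ ((fun r : ℝ => fun w => x w + r * δ w) '' Set.Icc 0 t) :=
      ⟨0, ⟨le_refl 0, ht⟩, funext fun w => by ring⟩
    exact hconn.subset_connectedComponentIn hxin hsubF ⟨t, ⟨ht, le_refl t⟩, rfl⟩
  have hδ0 : ∀ w, δ w = 0 := by
    intro w
    by_contra hδw
    obtain ⟨Cb, hCb⟩ := Metric.isBounded_iff.mp hbd
    have habs : |δ w| = 1 := by
      rcases htri w with ⟨hdw, _⟩ | ⟨hdw, _⟩ | ⟨hdw, _⟩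
      · rw [hdw]; norm_num
      · rw [hdw]; norm_num
      · exact absurd hdw hδw
    set t : ℝ := |Cb| + 1 with htdef
    have ht : 0 ≤ t := by positivity
    have hmem1 : x ∈ connectedComponentIn (arrComplement G m) x := mem_connectedComponentIn hxF
    have hmem2 := hray t ht
    have hdist := hCb hmem1 hmem2
    have hcoord := dist_le_pi_dist x (fun w => x w + t * δ w) w
    rw [Real.dist_eq] at hcoord
    have heq : |x w - (x w + t * δ w)| = t := by
      have : x w - (x w + t * δ w) = -(t * δ w) := by ring
      rw [this, abs_neg, abs_mul, habs, mul_one, abs_of_nonneg ht]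
    rw [heq] at hcoord
    have hCb0 : 0 ≤ Cb := le_trans dist_nonneg (hCb hmem1 hmem1)
    have : |Cb| = Cb := abs_of_nonneg hCb0
    linarith
  have hbox : 0 < x v ∧ x v < ((k : ℕ) : ℝ) := by
    rcases htri v with ⟨hdv, _⟩ | ⟨hdv, _⟩ | ⟨_, h⟩
    · rw [hδ0 v] at hdv; norm_num at hdv
    · rw [hδ0 v] at hdv; norm_num at hdv
    · exact h
  set c : ℕ := ⌊x v⌋₊ with hcdef
  have hcle : (c : ℝ) ≤ x v := Nat.floor_le (le_of_lt hbox.1)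
  have hclt : x v < (c : ℝ) + 1 := Nat.lt_floor_add_one (x v)
  have hck : c < k := by
    have : (c : ℝ) < ((k : ℕ) : ℝ) := lt_of_le_of_lt hcle hbox.2
    exact_mod_cast this
  have hne : x v ≠ (c : ℝ) := hxF.2 v c (Nat.le_of_lt hck)
  exact ⟨c, hck, lt_of_le_of_ne hcle (Ne.symm hne), hclt⟩

lemma extract {x : V → ℝ} (hxF : x ∈ arrComplement G m)
    (hbd : Bornology.IsBounded (connectedComponentIn (arrComplement G m) x)) :
    ∃ c : V → Fin (m - 2), Realizes G (m - 2) c (fun u w => G.Adj u w ∧ x u < x w) x := by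
  refine ⟨fun v => ⟨(coords_box hxF hbd v).choose, (coords_box hxF hbd v).choose_spec.1⟩, ?_, ?_, ?_⟩
  · intro v
    exact ⟨(coords_box hxF hbd v).choose_spec.2.1, (coords_box hxF hbd v).choose_spec.2.2⟩
  · exact hxF.1
  · intro u w hadj
    constructor
    · rintro ⟨_, h⟩; exact h
    · intro h; exact ⟨hadj, h⟩

theorem card_regions_eq (G : SimpleGraph V) (m : ℕ) :
    Nat.card {C : Set (V → ℝ) //
        (∃ x ∈ arrComplement G m, C = connectedComponentIn (arrComplement G m) x) ∧
        Bornology.IsBounded C}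
      = Nat.card {p : (V → Fin (m - 2)) × (V → V → Prop) // p ∈ DD G (m - 2)} := by
  apply Nat.card_congr
  refine
    { toFun := fun C => ⟨(((extract C.2.1.choose_spec.1 (by
          rw [← C.2.1.choose_spec.2]; exact C.2.2)).choose),
        fun u w => G.Adj u w ∧ C.2.1.choose u < C.2.1.choose w), ?_⟩
      invFun := fun p => ⟨connectedComponentIn (arrComplement G m) p.2.2.choose,
        ⟨p.2.2.choose, realizes_mem_arr p.2.2.choose_spec, rfl⟩,
        comp_bounded p.2.2.choose_spec⟩
      left_inv := ?_
      right_inv := ?_ }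
  · constructor
    · rintro u w hnadj ⟨hadj, _⟩
      exact hnadj hadj
    · exact ⟨C.2.1.choose, (extract C.2.1.choose_spec.1 (by
        rw [← C.2.1.choose_spec.2]; exact C.2.2)).choose_spec⟩
  · rintro ⟨C, hex, hbd⟩
    apply Subtype.ext
    simp only []
    set x₀ := hex.choose with hx₀def
    obtain ⟨hx₀F, hx₀C⟩ := hex.choose_spec
    set hbd' : Bornology.IsBounded (connectedComponentIn (arrComplement G m) x₀) := by
      rw [← hx₀C]; exact hbd
    -- the chosen z realizing the extracted data lies in the same component as x₀
    have hreal₀ := (extract hx₀F hbd').choose_spec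
    have hzspec := (⟨x₀, hreal₀⟩ : ∃ z, Realizes G (m - 2)
      (extract hx₀F hbd').choose (fun u w => G.Adj u w ∧ x₀ u < x₀ w) z).choose_spec
    have := realizes_same_comp hzspec hreal₀
    exact this.trans hx₀C.symm
  · rintro ⟨⟨c, s⟩, hmem⟩
    apply Subtype.ext
    have hz := hmem.2.choose_spec
    set z := hmem.2.choose with hzdef
    have hzF : z ∈ arrComplement G m := realizes_mem_arr hz
    have hex' : ∃ x ∈ arrComplement G m, connectedComponentIn (arrComplement G m) z
        = connectedComponentIn (arrComplement G m) x := ⟨z, hzF, rfl⟩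
    have hx₁spec := hex'.choose_spec
    set x₁ := hex'.choose with hx₁def
    obtain ⟨hx₁F, hx₁C⟩ := hx₁spec
    have hx₁mem : x₁ ∈ connectedComponentIn (arrComplement G m) z := by
      rw [hx₁C]
      exact mem_connectedComponentIn hx₁F
    have hbd₁ : Bornology.IsBounded (connectedComponentIn (arrComplement G m) x₁) := by
      rw [← hx₁C]
      exact comp_bounded hz
    have hc₁ := (extract hx₁F hbd₁).choose_spec
    show ((extract hx₁F hbd₁).choose, fun u w => G.Adj u w ∧ x₁ u < x₁ w) = (c, s)
    have h1 : (extract hx₁F hbd₁).choose = c := by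
      funext v
      have hiv : ((c v : ℕ)) ≤ m - 2 := le_of_lt (c v).2
      have hiv1 : ((c v : ℕ) + 1) ≤ m - 2 := (c v).2
      have hlow : ¬ (x₁ v < ((c v : ℕ) : ℝ)) := by
        rw [← comp_wall_sign hzF hx₁mem v hiv]
        have := (hz.1 v).1
        linarith
      have hxlow : ((c v : ℕ) : ℝ) < x₁ v := by
        rcases lt_or_eq_of_le (not_lt.mp hlow) with h | h
        · exact h
        · exact absurd h.symm (hx₁F.2 v (c v : ℕ) hiv)
      have hxhigh : x₁ v < ((c v : ℕ) : ℝ) + 1 := by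
        have hcast : (((c v : ℕ) + 1 : ℕ) : ℝ) = ((c v : ℕ) : ℝ) + 1 := by push_cast; ring
        have := (comp_wall_sign hzF hx₁mem v hiv1).mp (by
          rw [hcast]
          exact (hz.1 v).2)
        rw [hcast] at this
        exact this
      exact same_box ((extract hx₁F hbd₁).choose_spec.1 v) ⟨hxlow, hxhigh⟩
    have h2 : (fun u w => G.Adj u w ∧ x₁ u < x₁ w) = s := by
      apply propfun_ext
      intro u w
      by_cases hadj : G.Adj u w
      · rw [← comp_edge_sign hzF hx₁mem hadj]
        constructor
        · rintro ⟨_, h⟩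
          exact (hz.2.2 u w hadj).mpr h
        · intro h
          exact ⟨hadj, (hz.2.2 u w hadj).mp h⟩
      · exact iff_of_false (fun hc => hadj hc.1) (hmem.1 u w hadj)
    rw [h1, h2]
end Geom2

/-- The arrangement `A(G;m)` has exactly `(-1)^|V| χ_G(-(m-2))` bounded regions. -/
theorem card_bounded_regions {V : Type*} [Fintype V] (G : SimpleGraph V)
    (m : ℕ) (hm : 2 ≤ m) (P : Polynomial ℤ) (hP : IsChromaticPoly G P) :
    (Nat.card {C : Set (V → ℝ) //
        (∃ x ∈ arrComplement G m, C = connectedComponentIn (arrComplement G m) x) ∧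
        Bornology.IsBounded C} : ℤ) =
      (-1) ^ (Fintype.card V) * P.eval (-((m : ℤ) - 2)) := by
  have h1 := card_regions_eq G m
  have h2 := card_DD_eq (m - 2) (G.edgeFinset.card) V G (le_refl _)
  have hP2 : P = CP G := poly_ext (fun k => by rw [hP k, CP_eval])
  have hcast : -((m : ℤ) - 2) = -(((m - 2 : ℕ) : ℤ)) := by
    have h3 : ((m - 2 : ℕ) : ℤ) = (m : ℤ) - 2 := by
      have := Nat.cast_sub (R := ℤ) hm
      exact_mod_cast this
    rw [h3]
  rw [h1, hcast, hP2]
  exact h2
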